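/- Let (z_n)_{n≥0} be a sequence in ℍ and b ∈ ℝ such that log(Im z_n)/n → b and dist(z_{n+1}, z_n)/n → 0 as n → ∞. Then dist(z_n, z_0)/n → |b| as n → ∞, and there exists a geodesic ray γ : [0,∞) → ℍ such that dist(z_n, γ(|b|·n))/n → 0 as n → ∞. -/

import Mathlib

open Filter UpperHalfPlane

namespace RegAux
open Real Finset


noncomputable def pt (x y : ℝ) (hy : 0 < y) : UpperHalfPlane := UpperHalfPlane.mk ⟨x, y⟩ hy

@[simp] lemma pt_re (x y : ℝ) (hy : 0 < y) : (pt x y hy).re = x := rfl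
@[simp] lemma pt_im (x y : ℝ) (hy : 0 < y) : (pt x y hy).im = y := rfl
@[simp] lemma pt_coe (x y : ℝ) (hy : 0 < y) : ((pt x y hy : UpperHalfPlane) : ℂ) = ⟨x, y⟩ := rfl

lemma dist_pt_vertical (x y y' : ℝ) (hy : 0 < y) (hy' : 0 < y') :
    dist (pt x y hy) (pt x y' hy') = |Real.log y - Real.log y'| := by
  rw [UpperHalfPlane.dist_of_re_eq (z := pt x y hy) (w := pt x y' hy') rfl]
  simp [Real.dist_eq]

lemma dist_pt_horizontal (x x' y : ℝ) (hy : 0 < y) :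
    dist (pt x y hy) (pt x' y hy) ≤ |x - x'| / y := by
  refine (UpperHalfPlane.dist_le_dist_coe_div_sqrt _ _).trans_eq ?_
  rw [pt_coe, pt_coe, Complex.dist_of_im_eq (z := (⟨x, y⟩ : ℂ)) (w := (⟨x', y⟩ : ℂ)) rfl]
  simp [Real.dist_eq, Real.sqrt_mul_self hy.le]

lemma dist_le_of_im_le (z w : UpperHalfPlane) (Y : ℝ) (hz : z.im ≤ Y) (hw : w.im ≤ Y) :
    dist z w ≤ (Real.log Y - Real.log z.im) + |z.re - w.re| / Y
      + (Real.log Y - Real.log w.im) := by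
  have hY : 0 < Y := lt_of_lt_of_le z.im_pos hz
  have hlz : Real.log z.im ≤ Real.log Y := Real.log_le_log z.im_pos hz
  have hlw : Real.log w.im ≤ Real.log Y := Real.log_le_log w.im_pos hw
  have h1 : dist z (pt z.re Y hY) = Real.log Y - Real.log z.im := by
    rw [UpperHalfPlane.dist_of_re_eq (z := z) (w := pt z.re Y hY) (by simp), Real.dist_eq,
      pt_im, abs_of_nonpos (by linarith), neg_sub]
  have h3 : dist (pt w.re Y hY) w = Real.log Y - Real.log w.im := by
    rw [UpperHalfPlane.dist_of_re_eq (z := pt w.re Y hY) (w := w) (by simp), Real.dist_eq,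
      pt_im, abs_of_nonneg (by linarith)]
  calc dist z w ≤ dist z (pt z.re Y hY) + dist (pt z.re Y hY) (pt w.re Y hY)
        + dist (pt w.re Y hY) w := dist_triangle4 _ _ _ _
    _ ≤ (Real.log Y - Real.log z.im) + |z.re - w.re| / Y + (Real.log Y - Real.log w.im) := by
        rw [h1, h3]
        gcongr
        exact dist_pt_horizontal _ _ _ _

lemma abs_re_sub_le (z w : UpperHalfPlane) :
    |z.re - w.re| ≤ Real.exp ((Real.log z.im + Real.log w.im + dist z w) / 2) := by
  have h1 : |z.re - w.re| ≤ dist (z : ℂ) (w : ℂ) := by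
    rw [Complex.dist_eq]
    have := Complex.abs_re_le_norm ((z : ℂ) - w)
    simpa using this
  have h2 : dist (z : ℂ) w = 2 * Real.sqrt (z.im * w.im) * Real.sinh (dist z w / 2) := by
    rw [UpperHalfPlane.sinh_half_dist]
    field_simp
  have h3 : Real.sqrt (z.im * w.im) = Real.exp ((Real.log z.im + Real.log w.im) / 2) := by
    rw [show z.im * w.im = Real.exp ((Real.log z.im + Real.log w.im) / 2)
        * Real.exp ((Real.log z.im + Real.log w.im) / 2) by
      rw [← Real.exp_add]
      rw [show (Real.log z.im + Real.log w.im) / 2 + (Real.log z.im + Real.log w.im) / 2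
          = Real.log z.im + Real.log w.im by ring]
      rw [Real.exp_add, Real.exp_log z.im_pos, Real.exp_log w.im_pos]]
    exact Real.sqrt_mul_self (Real.exp_pos _).le
  have h4 : Real.sinh (dist z w / 2) ≤ Real.exp (dist z w / 2) / 2 := by
    rw [Real.sinh_eq]
    have := (Real.exp_pos (-(dist z w / 2))).le
    linarith
  calc |z.re - w.re| ≤ dist (z : ℂ) w := h1
    _ = 2 * Real.sqrt (z.im * w.im) * Real.sinh (dist z w / 2) := h2
    _ ≤ 2 * Real.exp ((Real.log z.im + Real.log w.im) / 2) * (Real.exp (dist z w / 2) / 2) := by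
        rw [h3]
        exact mul_le_mul_of_nonneg_left h4 (by positivity)
    _ = Real.exp ((Real.log z.im + Real.log w.im + dist z w) / 2) := by
        rw [show 2 * Real.exp ((Real.log z.im + Real.log w.im) / 2)
            * (Real.exp (dist z w / 2) / 2)
            = Real.exp ((Real.log z.im + Real.log w.im) / 2) * Real.exp (dist z w / 2) by ring,
          ← Real.exp_add]
        congr 1
        ring


lemma ev_abs_sub_linear {f : ℕ → ℝ} {L : ℝ}
    (h : Filter.Tendsto (fun n : ℕ => f n / n) atTop (nhds L)) {ε : ℝ} (hε : 0 < ε) :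
    ∀ᶠ n : ℕ in atTop, |f n - L * n| ≤ ε * n := by
  obtain ⟨N, hN⟩ := Metric.tendsto_atTop.1 h ε hε
  filter_upwards [eventually_ge_atTop (max N 1)] with n hn
  have hn1 : 1 ≤ n := le_trans (le_max_right _ _) hn
  have hN' := hN n (le_trans (le_max_left _ _) hn)
  rw [Real.dist_eq] at hN'
  have hnpos : (0 : ℝ) < n := by exact_mod_cast hn1
  have heq : |f n - L * n| = |f n / n - L| * n := by
    rw [← abs_of_pos hnpos, ← abs_mul]
    congr 1
    field_simp
    rw [abs_of_pos hnpos]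
    ring
  rw [heq]
  exact mul_le_mul_of_nonneg_right hN'.le hnpos.le

lemma tendsto_div_nat {f : ℕ → ℝ} {L : ℝ}
    (h : ∀ ε : ℝ, 0 < ε → ∀ᶠ n : ℕ in atTop, |f n - L * n| ≤ ε * n) :
    Filter.Tendsto (fun n : ℕ => f n / n) atTop (nhds L) := by
  rw [Metric.tendsto_atTop]
  intro ε hε
  obtain ⟨N, hN⟩ := eventually_atTop.1 ((h (ε / 2) (by positivity)).and (eventually_ge_atTop 1))
  refine ⟨N, fun n hn => ?_⟩
  obtain ⟨h1, h2⟩ := hN n hn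
  have hnpos : (0 : ℝ) < n := by exact_mod_cast h2
  rw [Real.dist_eq]
  have heq : |f n / n - L| = |f n - L * n| / n := by
    rw [← abs_of_pos hnpos, ← abs_div]
    congr 1
    field_simp
    rw [abs_of_pos hnpos]
    ring
  rw [heq]
  calc |f n - L * n| / (n : ℝ) ≤ ε / 2 * n / n := by gcongr
    _ = ε / 2 := by
        rw [mul_div_assoc, div_self hnpos.ne', mul_one]
    _ < ε := by linarith

lemma ev_const_le {δ : ℝ} (hδ : 0 < δ) (c : ℝ) : ∀ᶠ n : ℕ in atTop, c ≤ δ * n := by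
  have h : Filter.Tendsto (fun n : ℕ => δ * n) atTop atTop :=
    Filter.Tendsto.const_mul_atTop hδ tendsto_natCast_atTop_atTop
  exact h.eventually_ge_atTop c

lemma sum_exp_le {c : ℝ} (hc : c < 0) (s : Finset ℕ) :
    ∑ k ∈ s, Real.exp (c * k) ≤ (1 - Real.exp c)⁻¹ := by
  have hr : Real.exp c < 1 := Real.exp_lt_one_iff.2 hc
  calc ∑ k ∈ s, Real.exp (c * k) = ∑ k ∈ s, (Real.exp c) ^ k := by
        refine Finset.sum_congr rfl fun k _ => ?_
        rw [← Real.exp_nat_mul, mul_comm]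
    _ ≤ ∑' k : ℕ, (Real.exp c) ^ k :=
        Summable.sum_le_tsum s (fun k _ => by positivity)
          (summable_geometric_of_lt_one (Real.exp_pos c).le hr)
    _ = (1 - Real.exp c)⁻¹ := tsum_geometric_of_lt_one (Real.exp_pos c).le hr

lemma sum_exp_Ico_le {c : ℝ} (hc : c < 0) (n m : ℕ) :
    ∑ k ∈ Finset.Ico n m, Real.exp (c * k) ≤ Real.exp (c * n) * (1 - Real.exp c)⁻¹ := by
  rcases le_or_gt n m with h | h
  · rw [Finset.sum_Ico_eq_sum_range]
    have : ∀ j : ℕ, j ∈ Finset.range (m - n) →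
        Real.exp (c * ((n : ℕ) + j : ℕ)) = Real.exp (c * n) * Real.exp (c * j) := by
      intro j _
      rw [← Real.exp_add]
      congr 1
      push_cast
      ring
    rw [Finset.sum_congr rfl this, ← Finset.mul_sum]
    exact mul_le_mul_of_nonneg_left (sum_exp_le hc _) (Real.exp_pos _).le
  · rw [Finset.Ico_eq_empty (by omega)]
    simp only [Finset.sum_empty]
    have hr : Real.exp c < 1 := Real.exp_lt_one_iff.2 hc
    exact mul_nonneg (Real.exp_pos _).le (inv_nonneg.2 (by linarith))
open Filter UpperHalfPlane


lemma pt_eq {x y x' y' : ℝ} {hy : 0 < y} {hy' : 0 < y'} (hx : x = x') (h : y = y') :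
    pt x y hy = pt x' y' hy' := by subst hx; subst h; rfl

lemma key_lemma (z : ℕ → UpperHalfPlane) (b : ℝ)
    (him : Tendsto (fun n : ℕ => Real.log (z n).im / n) atTop (nhds b))
    (hstep : Tendsto (fun n : ℕ => dist (z (n + 1)) (z n) / n) atTop (nhds 0))
    {δ : ℝ} (hδ : 0 < δ) :
    ∃ N : ℕ, ∀ n : ℕ, N ≤ n →
      |Real.log (z n).im - b * n| ≤ δ * n ∧
      |(z (n + 1)).re - (z n).re| ≤ Real.exp ((b + 2 * δ) * n + (|b| + δ) / 2) := by
  have h1 := ev_abs_sub_linear him hδ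
  have h2 := ev_abs_sub_linear hstep hδ
  obtain ⟨N, hN⟩ := eventually_atTop.1 (h1.and h2)
  refine ⟨N, fun n hn => ?_⟩
  have hA := (hN n hn).1
  have hD := (hN n hn).2
  have hA1 := (hN (n + 1) (by omega)).1
  refine ⟨hA, ?_⟩
  refine (abs_re_sub_le (z (n + 1)) (z n)).trans ?_
  apply Real.exp_le_exp.2
  rw [zero_mul, sub_zero] at hD
  have hdist : dist (z (n + 1)) (z n) ≤ δ * n := (le_abs_self _).trans hD
  have han : Real.log (z n).im ≤ b * n + δ * n := by
    have := (le_abs_self _).trans hA; linarith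
  have han1 : Real.log (z (n + 1)).im ≤ b * n + δ * n + (|b| + δ) := by
    have h := (le_abs_self _).trans hA1
    push_cast at h
    have hbb : b ≤ |b| := le_abs_self b
    linarith
  have hn0 : (0 : ℝ) ≤ n := n.cast_nonneg
  have : 0 ≤ δ * n := mul_nonneg hδ.le hn0
  linarith

lemma setup_lemma (z : ℕ → UpperHalfPlane) (b : ℝ)
    (him : Tendsto (fun n : ℕ => Real.log (z n).im / n) atTop (nhds b))
    (hstep : Tendsto (fun n : ℕ => dist (z (n + 1)) (z n) / n) atTop (nhds 0))
    {δ : ℝ} (hδ : 0 < δ) :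
    ∃ N : ℕ, ∃ C : ℝ, 1 ≤ C ∧ ∀ n : ℕ, N ≤ n →
      |Real.log (z n).im - b * n| ≤ δ * n ∧
      |(z n).re - (z 0).re| ≤ C * Real.exp ((max b 0 + 3 * δ) * n) ∧
      |(z n).re| ≤ C * Real.exp ((max b 0 + 3 * δ) * n) := by
  obtain ⟨N, hN⟩ := key_lemma z b him hstep hδ
  set c₀ : ℝ := (|b| + δ) / 2 with hc₀
  set C₁ : ℝ := Real.exp c₀ * (1 - Real.exp (-δ))⁻¹ with hC₁
  have hexpδ : Real.exp (-δ) < 1 := Real.exp_lt_one_iff.2 (by linarith)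
  have hC₁0 : 0 ≤ C₁ := mul_nonneg (Real.exp_pos _).le (inv_nonneg.2 (by linarith))
  have hsum : ∀ n : ℕ, N ≤ n →
      |(z n).re - (z N).re| ≤ C₁ * Real.exp ((max b 0 + 3 * δ) * n) := by
    intro n hn
    rw [abs_sub_comm, ← Real.dist_eq]
    refine (dist_le_Ico_sum_dist (fun k => (z k).re) hn).trans ?_
    have hterm : ∀ k ∈ Finset.Ico N n,
        dist ((z k).re) ((z (k + 1)).re)
          ≤ (Real.exp c₀ * Real.exp ((max b 0 + 3 * δ) * n)) * Real.exp ((-δ) * k) := by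
      intro k hk
      obtain ⟨hk1, hk2⟩ := Finset.mem_Ico.1 hk
      rw [Real.dist_eq, abs_sub_comm]
      refine (hN k hk1).2.trans ?_
      rw [← Real.exp_add, ← Real.exp_add]
      apply Real.exp_le_exp.2
      have hkn : (k : ℝ) ≤ n := by exact_mod_cast hk2.le
      have hk0 : (0 : ℝ) ≤ k := k.cast_nonneg
      have hb1 : b ≤ max b 0 := le_max_left b 0
      have hb2 : (0 : ℝ) ≤ max b 0 := le_max_right b 0
      nlinarith [mul_le_mul_of_nonneg_right hb1 hk0,
        mul_le_mul_of_nonneg_left hkn (add_nonneg hb2 (by linarith : (0:ℝ) ≤ 3 * δ))]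
    refine (Finset.sum_le_sum hterm).trans ?_
    rw [← Finset.mul_sum]
    calc (Real.exp c₀ * Real.exp ((max b 0 + 3 * δ) * n)) * ∑ k ∈ Finset.Ico N n, Real.exp ((-δ) * k)
        ≤ (Real.exp c₀ * Real.exp ((max b 0 + 3 * δ) * n)) * (1 - Real.exp (-δ))⁻¹ := by
          have hs := sum_exp_le (show (-δ) < 0 by linarith) (Finset.Ico N n)
          have hp : (0:ℝ) ≤ Real.exp c₀ * Real.exp ((max b 0 + 3 * δ) * n) := by positivity
          exact mul_le_mul_of_nonneg_left hs hp
      _ = C₁ * Real.exp ((max b 0 + 3 * δ) * n) := by rw [hC₁]; ring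
  refine ⟨N, |(z N).re - (z 0).re| + |(z 0).re| + C₁ + 1, by linarith [abs_nonneg ((z N).re - (z 0).re), abs_nonneg ((z 0).re)], fun n hn => ?_⟩
  have hE1 : 1 ≤ Real.exp ((max b 0 + 3 * δ) * n) := by
    rw [← Real.exp_zero]
    apply Real.exp_le_exp.2
    have hb2 : (0 : ℝ) ≤ max b 0 := le_max_right b 0
    positivity
  have hs := hsum n hn
  refine ⟨(hN n hn).1, ?_, ?_⟩
  · have : |(z n).re - (z 0).re| ≤ |(z n).re - (z N).re| + |(z N).re - (z 0).re| :=
      abs_sub_le _ _ _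
    nlinarith [abs_nonneg ((z N).re - (z 0).re), abs_nonneg ((z 0).re)]
  · have h1 : |(z n).re| ≤ |(z n).re - (z N).re| + |(z N).re - (z 0).re| + |(z 0).re| := by
      have := abs_sub_le (z n).re (z N).re (z 0).re
      have h2 := abs_sub_abs_le_abs_sub (z n).re (z 0).re
      have := abs_add_le ((z n).re - (z 0).re) ((z 0).re)
      simp only [sub_add_cancel] at this
      linarith [abs_sub_le (z n).re (z N).re (z 0).re]
    nlinarith [abs_nonneg ((z N).re - (z 0).re), abs_nonneg ((z 0).re)]

lemma part1_lemma (z : ℕ → UpperHalfPlane) (b : ℝ)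
    (him : Tendsto (fun n : ℕ => Real.log (z n).im / n) atTop (nhds b))
    (hstep : Tendsto (fun n : ℕ => dist (z (n + 1)) (z n) / n) atTop (nhds 0)) :
    Tendsto (fun n : ℕ => dist (z n) (z 0) / n) atTop (nhds |b|) := by
  apply tendsto_div_nat
  intro ε hε
  have hδ : (0:ℝ) < ε / 14 := by linarith
  obtain ⟨N, C, hC1, hS⟩ := setup_lemma z b him hstep hδ
  have hC0 : (0:ℝ) < C := lt_of_lt_of_le one_pos hC1
  have habs : 2 * max b 0 - b = |b| := by
    rcases le_total b 0 with h | h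
    · rw [max_eq_right h, abs_of_nonpos h]; ring
    · rw [max_eq_left h, abs_of_nonneg h]; ring
  have hmb : (0:ℝ) ≤ max b 0 := le_max_right b 0
  filter_upwards [eventually_ge_atTop N, ev_const_le hδ (Real.log C),
    ev_const_le hδ |Real.log (z 0).im|, ev_const_le hδ 1] with n hnN hlogC hA0 h1n
  obtain ⟨hA, hX, _⟩ := hS n hnN
  have hn0 : (0:ℝ) ≤ n := n.cast_nonneg
  have hδn : (0:ℝ) ≤ (ε/14) * n := mul_nonneg hδ.le hn0
  set En := Real.exp ((max b 0 + 3 * (ε/14)) * n) with hEn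
  set Yn := C * En * Real.exp ((ε/14) * n) with hYn
  have hEpos : (0:ℝ) < En := Real.exp_pos _
  have hE1 : (1:ℝ) ≤ En := by
    rw [hEn, ← Real.exp_zero]
    exact Real.exp_le_exp.2 (mul_nonneg (by linarith) hn0)
  have hEδ1 : (1:ℝ) ≤ Real.exp ((ε/14) * n) := by
    rw [← Real.exp_zero]
    exact Real.exp_le_exp.2 hδn
  have hYpos : (0:ℝ) < Yn := by
    rw [hYn]; exact mul_pos (mul_pos hC0 hEpos) (Real.exp_pos _)
  have hCe : (1:ℝ) ≤ C * Real.exp ((ε/14) * n) := by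
    calc (1:ℝ) = 1 * 1 := by ring
      _ ≤ C * Real.exp ((ε/14) * n) := mul_le_mul hC1 hEδ1 zero_le_one hC0.le
  have hEYn : En ≤ Yn := by
    calc En = En * 1 := (mul_one En).symm
      _ ≤ En * (C * Real.exp ((ε/14) * n)) := mul_le_mul_of_nonneg_left hCe hEpos.le
      _ = Yn := by rw [hYn]; ring
  have hCE1 : (1:ℝ) ≤ C * En := by
    calc (1:ℝ) = 1 * 1 := by ring
      _ ≤ C * En := mul_le_mul hC1 hE1 zero_le_one hC0.le
  have hexpYn : Real.exp ((ε/14) * n) ≤ Yn := by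
    calc Real.exp ((ε/14) * n) = 1 * Real.exp ((ε/14) * n) := (one_mul _).symm
      _ ≤ (C * En) * Real.exp ((ε/14) * n) :=
          mul_le_mul_of_nonneg_right hCE1 (Real.exp_pos _).le
      _ = Yn := by rw [hYn]
  have hCEYn : C * En ≤ Yn := by
    calc C * En = (C * En) * 1 := (mul_one _).symm
      _ ≤ (C * En) * Real.exp ((ε/14) * n) :=
          mul_le_mul_of_nonneg_left hEδ1 (mul_pos hC0 hEpos).le
      _ = Yn := by rw [hYn]
  have han := abs_le.1 hA
  have hbmaxn : b * (n:ℝ) ≤ max b 0 * n :=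
    mul_le_mul_of_nonneg_right (le_max_left b 0) hn0
  have him_n : (z n).im ≤ Yn := by
    calc (z n).im = Real.exp (Real.log (z n).im) := (Real.exp_log (z n).im_pos).symm
      _ ≤ En := by
          rw [hEn]; apply Real.exp_le_exp.2
          linarith [han.2]
      _ ≤ Yn := hEYn
  have him_0 : (z 0).im ≤ Yn := by
    calc (z 0).im = Real.exp (Real.log (z 0).im) := (Real.exp_log (z 0).im_pos).symm
      _ ≤ Real.exp ((ε/14) * n) := Real.exp_le_exp.2 ((le_abs_self _).trans hA0)
      _ ≤ Yn := hexpYn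
  have hub := dist_le_of_im_le (z n) (z 0) Yn him_n him_0
  have hlogY : Real.log Yn = Real.log C + ((max b 0 + 3 * (ε/14)) * n + (ε/14) * n) := by
    rw [hYn, Real.log_mul (mul_pos hC0 hEpos).ne' (Real.exp_pos _).ne',
      Real.log_mul hC0.ne' hEpos.ne', hEn, Real.log_exp, Real.log_exp]
    ring
  have hfrac : |(z n).re - (z 0).re| / Yn ≤ 1 := by
    rw [div_le_one hYpos]
    exact hX.trans hCEYn
  rw [abs_le]
  constructor
  · have hlow := UpperHalfPlane.dist_log_im_le (z n) (z 0)
    rw [Real.dist_eq] at hlow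
    have h1 : |Real.log (z n).im| - |Real.log (z 0).im|
        ≤ |Real.log (z n).im - Real.log (z 0).im| := abs_sub_abs_le_abs_sub _ _
    have h2 : |b * (n:ℝ)| ≤ |Real.log (z n).im| + |b * n - Real.log (z n).im| := by
      have := abs_add_le (Real.log (z n).im) (b * (n:ℝ) - Real.log (z n).im)
      simpa using this
    have h3 : |b * (n:ℝ) - Real.log (z n).im| ≤ (ε/14) * n := by
      rw [abs_sub_comm]; exact hA
    have hbn : |b * (n:ℝ)| = |b| * n := by rw [abs_mul, Nat.abs_cast]
    linarith
  · have hkey : (2 * max b 0 - b) * (n:ℝ) = |b| * n := by rw [habs]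
    linarith [hub, hfrac, hlogY, hkey, han.1, h1n, hlogC,
      neg_abs_le (Real.log (z 0).im), hA0]

lemma case_nonneg (z : ℕ → UpperHalfPlane) (b : ℝ)
    (him : Tendsto (fun n : ℕ => Real.log (z n).im / n) atTop (nhds b))
    (hstep : Tendsto (fun n : ℕ => dist (z (n + 1)) (z n) / n) atTop (nhds 0))
    (hb : 0 ≤ b) :
    Tendsto (fun n : ℕ =>
      dist (z n) (pt 0 (Real.exp (|b| * n)) (Real.exp_pos _)) / n) atTop (nhds 0) := by
  apply tendsto_div_nat
  intro ε hε
  have hδ : (0:ℝ) < ε / 14 := by linarith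
  obtain ⟨N, C, hC1, hS⟩ := setup_lemma z b him hstep hδ
  have hC0 : (0:ℝ) < C := lt_of_lt_of_le one_pos hC1
  have hmax : max b 0 = b := max_eq_left hb
  filter_upwards [eventually_ge_atTop N, ev_const_le hδ (Real.log C),
    ev_const_le hδ 1] with n hnN hlogC h1n
  obtain ⟨hA, _, hX⟩ := hS n hnN
  have hn0 : (0:ℝ) ≤ n := n.cast_nonneg
  have hδn : (0:ℝ) ≤ (ε/14) * n := mul_nonneg hδ.le hn0
  rw [zero_mul, sub_zero, abs_of_nonneg dist_nonneg]
  have hptq : pt 0 (Real.exp (|b| * n)) (Real.exp_pos _)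
      = pt 0 (Real.exp (b * n)) (Real.exp_pos _) := pt_eq rfl (by rw [abs_of_nonneg hb])
  rw [hptq]
  set En := Real.exp ((max b 0 + 3 * (ε/14)) * n) with hEn
  set Yn := C * En * Real.exp ((ε/14) * n) with hYn
  have hEpos : (0:ℝ) < En := Real.exp_pos _
  have hE1 : (1:ℝ) ≤ En := by
    rw [hEn, ← Real.exp_zero]
    refine Real.exp_le_exp.2 (mul_nonneg ?_ hn0)
    rw [hmax]; linarith
  have hEδ1 : (1:ℝ) ≤ Real.exp ((ε/14) * n) := by
    rw [← Real.exp_zero]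
    exact Real.exp_le_exp.2 hδn
  have hYpos : (0:ℝ) < Yn := by
    rw [hYn]; exact mul_pos (mul_pos hC0 hEpos) (Real.exp_pos _)
  have hCe : (1:ℝ) ≤ C * Real.exp ((ε/14) * n) := by
    calc (1:ℝ) = 1 * 1 := by ring
      _ ≤ C * Real.exp ((ε/14) * n) := mul_le_mul hC1 hEδ1 zero_le_one hC0.le
  have hEYn : En ≤ Yn := by
    calc En = En * 1 := (mul_one En).symm
      _ ≤ En * (C * Real.exp ((ε/14) * n)) := mul_le_mul_of_nonneg_left hCe hEpos.le
      _ = Yn := by rw [hYn]; ring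
  have hCE1 : (1:ℝ) ≤ C * En := by
    calc (1:ℝ) = 1 * 1 := by ring
      _ ≤ C * En := mul_le_mul hC1 hE1 zero_le_one hC0.le
  have hCEYn : C * En ≤ Yn := by
    calc C * En = (C * En) * 1 := (mul_one _).symm
      _ ≤ (C * En) * Real.exp ((ε/14) * n) :=
          mul_le_mul_of_nonneg_left hEδ1 (mul_pos hC0 hEpos).le
      _ = Yn := by rw [hYn]
  have han := abs_le.1 hA
  have him_n : (z n).im ≤ Yn := by
    calc (z n).im = Real.exp (Real.log (z n).im) := (Real.exp_log (z n).im_pos).symm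
      _ ≤ En := by
          rw [hEn, hmax]; apply Real.exp_le_exp.2
          linarith [han.2]
      _ ≤ Yn := hEYn
  have him_w : (pt 0 (Real.exp (b * n)) (Real.exp_pos _)).im ≤ Yn := by
    rw [pt_im]
    calc Real.exp (b * (n:ℝ)) ≤ En := by
          rw [hEn, hmax]; apply Real.exp_le_exp.2; linarith
      _ ≤ Yn := hEYn
  have hub := dist_le_of_im_le (z n) (pt 0 (Real.exp (b * n)) (Real.exp_pos _)) Yn him_n him_w
  rw [pt_re, pt_im, Real.log_exp, sub_zero] at hub
  have hlogY : Real.log Yn = Real.log C + ((max b 0 + 3 * (ε/14)) * n + (ε/14) * n) := by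
    rw [hYn, Real.log_mul (mul_pos hC0 hEpos).ne' (Real.exp_pos _).ne',
      Real.log_mul hC0.ne' hEpos.ne', hEn, Real.log_exp, Real.log_exp]
    ring
  have hfrac : |(z n).re| / Yn ≤ 1 := by
    rw [div_le_one hYpos]
    exact hX.trans hCEYn
  rw [hmax] at hlogY
  linarith [hub, hfrac, hlogY, han.1, h1n, hlogC]

lemma case_neg (z : ℕ → UpperHalfPlane) (b : ℝ)
    (him : Tendsto (fun n : ℕ => Real.log (z n).im / n) atTop (nhds b))
    (hstep : Tendsto (fun n : ℕ => dist (z (n + 1)) (z n) / n) atTop (nhds 0))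
    (hb : b < 0) :
    ∃ xlim : ℝ, Tendsto (fun n : ℕ =>
      dist (z n) (pt xlim (Real.exp (-(|b| * n))) (Real.exp_pos _)) / n) atTop (nhds 0) := by
  -- the real parts form a Cauchy sequence
  obtain ⟨N₀, hN₀⟩ := key_lemma z b him hstep (show (0:ℝ) < -b/4 by linarith)
  have hsum : Summable (fun k : ℕ => dist ((z k).re) ((z (k + 1)).re)) := by
    rw [← summable_nat_add_iff N₀]
    have hr1 : Real.exp (b/2) < 1 := Real.exp_lt_one_iff.2 (by linarith)
    refine Summable.of_nonneg_of_le (fun n => dist_nonneg) (fun n => ?_)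
      (((summable_geometric_of_lt_one (Real.exp_pos (b/2)).le hr1)).mul_left
        (Real.exp ((b/2) * N₀ + (|b| + -b/4) / 2)))
    rw [Real.dist_eq, abs_sub_comm]
    refine ((hN₀ (n + N₀) (by omega)).2).trans ?_
    rw [← Real.exp_nat_mul, ← Real.exp_add]
    apply Real.exp_le_exp.2
    push_cast
    apply le_of_eq
    ring
  have hcauchy : CauchySeq (fun n : ℕ => (z n).re) := cauchySeq_of_summable_dist hsum
  obtain ⟨xlim, hxlim⟩ := cauchySeq_tendsto_of_complete hcauchy
  refine ⟨xlim, ?_⟩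
  apply tendsto_div_nat
  intro ε hε
  set δ := min (ε/8) (-b/4) with hδdef
  have hδ1 : δ ≤ ε/8 := min_le_left _ _
  have hδ2 : δ ≤ -b/4 := min_le_right _ _
  have hδ0 : 0 < δ := lt_min (by linarith) (by linarith)
  have hbd : b + 2 * δ < 0 := by linarith
  obtain ⟨N, hN⟩ := key_lemma z b him hstep hδ0
  set C₃ := Real.exp ((|b| + δ) / 2) * (1 - Real.exp (b + 2 * δ))⁻¹ with hC₃def
  have hr1 : Real.exp (b + 2 * δ) < 1 := Real.exp_lt_one_iff.2 hbd
  have hC₃0 : 0 ≤ C₃ :=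
    mul_nonneg (Real.exp_pos _).le (inv_nonneg.2 (by linarith))
  have htail : ∀ n : ℕ, N ≤ n → |(z n).re - xlim| ≤ C₃ * Real.exp ((b + 2 * δ) * n) := by
    intro n hn
    have hm : ∀ m : ℕ, n ≤ m →
        |(z n).re - (z m).re| ≤ C₃ * Real.exp ((b + 2 * δ) * n) := by
      intro m hmn
      rw [← Real.dist_eq]
      refine (dist_le_Ico_sum_dist (fun k => (z k).re) hmn).trans ?_
      have hterm : ∀ k ∈ Finset.Ico n m, dist ((z k).re) ((z (k + 1)).re)
          ≤ Real.exp ((|b| + δ) / 2) * Real.exp ((b + 2 * δ) * k) := by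
        intro k hk
        obtain ⟨hk1, _⟩ := Finset.mem_Ico.1 hk
        rw [Real.dist_eq, abs_sub_comm]
        refine ((hN k (le_trans hn hk1)).2).trans ?_
        rw [← Real.exp_add]
        apply Real.exp_le_exp.2
        apply le_of_eq
        ring
      refine (Finset.sum_le_sum hterm).trans ?_
      rw [← Finset.mul_sum]
      calc Real.exp ((|b| + δ) / 2) * ∑ k ∈ Finset.Ico n m, Real.exp ((b + 2 * δ) * k)
          ≤ Real.exp ((|b| + δ) / 2)
            * (Real.exp ((b + 2 * δ) * n) * (1 - Real.exp (b + 2 * δ))⁻¹) :=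
            mul_le_mul_of_nonneg_left (sum_exp_Ico_le hbd n m) (Real.exp_pos _).le
        _ = C₃ * Real.exp ((b + 2 * δ) * n) := by rw [hC₃def]; ring
    have hlim : Tendsto (fun m : ℕ => |(z n).re - (z m).re|) atTop
        (nhds |(z n).re - xlim|) := (tendsto_const_nhds.sub hxlim).abs
    exact le_of_tendsto hlim (eventually_atTop.2 ⟨n, hm⟩)
  filter_upwards [eventually_ge_atTop N, ev_const_le hδ0 (Real.log (C₃ + 1)),
    ev_const_le hδ0 1] with n hnN hlogC h1n
  rw [zero_mul, sub_zero, abs_of_nonneg dist_nonneg]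
  have hptq : pt xlim (Real.exp (-(|b| * n))) (Real.exp_pos _)
      = pt xlim (Real.exp (b * n)) (Real.exp_pos _) :=
    pt_eq rfl (by rw [abs_of_neg hb]; ring_nf)
  rw [hptq]
  have hn0 : (0:ℝ) ≤ n := n.cast_nonneg
  have hδn : (0:ℝ) ≤ δ * n := mul_nonneg hδ0.le hn0
  set Yn := (C₃ + 1) * Real.exp ((b + 2 * δ) * n) with hYndef
  have hYpos : 0 < Yn := mul_pos (by linarith) (Real.exp_pos _)
  have han := abs_le.1 (hN n hnN).1
  have him_n : (z n).im ≤ Yn := by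
    calc (z n).im = Real.exp (Real.log (z n).im) := (Real.exp_log (z n).im_pos).symm
      _ ≤ Real.exp ((b + 2 * δ) * n) := by
          apply Real.exp_le_exp.2
          have : b * (n:ℝ) + δ * n ≤ b * n + 2 * δ * n := by linarith
          linarith [han.2]
      _ ≤ Yn := by
          rw [hYndef]
          calc Real.exp ((b + 2 * δ) * n) = 1 * Real.exp ((b + 2 * δ) * n) := (one_mul _).symm
            _ ≤ (C₃ + 1) * Real.exp ((b + 2 * δ) * n) :=
                mul_le_mul_of_nonneg_right (by linarith) (Real.exp_pos _).le
  have him_w : (pt xlim (Real.exp (b * n)) (Real.exp_pos _)).im ≤ Yn := by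
    rw [pt_im]
    calc Real.exp (b * (n:ℝ)) ≤ Real.exp ((b + 2 * δ) * n) := by
          apply Real.exp_le_exp.2; linarith
      _ ≤ Yn := by
          rw [hYndef]
          calc Real.exp ((b + 2 * δ) * n) = 1 * Real.exp ((b + 2 * δ) * n) := (one_mul _).symm
            _ ≤ (C₃ + 1) * Real.exp ((b + 2 * δ) * n) :=
                mul_le_mul_of_nonneg_right (by linarith) (Real.exp_pos _).le
  have hub := dist_le_of_im_le (z n) (pt xlim (Real.exp (b * n)) (Real.exp_pos _)) Yn him_n him_w
  rw [pt_re, pt_im, Real.log_exp] at hub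
  have hlogY : Real.log Yn = Real.log (C₃ + 1) + (b + 2 * δ) * n := by
    rw [hYndef, Real.log_mul (by linarith) (Real.exp_pos _).ne', Real.log_exp]
  have hfrac : |(z n).re - xlim| / Yn ≤ 1 := by
    rw [div_le_one hYpos]
    refine (htail n hnN).trans ?_
    rw [hYndef]
    exact mul_le_mul_of_nonneg_right (by linarith) (Real.exp_pos _).le
  have hεδ : 8 * δ ≤ ε := by linarith
  have hδn8 : 8 * (δ * n) ≤ ε * n := by
    calc 8 * (δ * n) = (8 * δ) * n := by ring
      _ ≤ ε * n := mul_le_mul_of_nonneg_right hεδ hn0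
  linarith [hub, hfrac, hlogY, han.1, h1n, hlogC]

end RegAux

/-- Kaimanovich's regularity criterion in the hyperbolic plane: if
`log(Im z_n)/n → b` and `dist(z_{n+1}, z_n)/n → 0`, then the sequence `(z_n)` is
regular with rate `|b|`: `dist(z_n, z_0)/n → |b|` and `z_n` stays sublinearly close
to a geodesic ray travelled at speed `|b|`. -/
theorem regular_sequence_upperHalfPlane (z : ℕ → UpperHalfPlane) (b : ℝ)
    (him : Tendsto (fun n : ℕ => Real.log (z n).im / n) atTop (nhds b))
    (hstep : Tendsto (fun n : ℕ => dist (z (n + 1)) (z n) / n) atTop (nhds 0)) :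
    Tendsto (fun n : ℕ => dist (z n) (z 0) / n) atTop (nhds |b|) ∧
    ∃ γ : ℝ → UpperHalfPlane,
      (∀ s t : ℝ, 0 ≤ s → 0 ≤ t → dist (γ s) (γ t) = |s - t|) ∧
      Tendsto (fun n : ℕ => dist (z n) (γ (|b| * n)) / n) atTop (nhds 0) := by
  constructor
  · exact RegAux.part1_lemma z b him hstep
  · rcases le_or_gt 0 b with hb | hb
    · refine ⟨fun t => RegAux.pt 0 (Real.exp t) (Real.exp_pos t), fun s t _ _ => ?_, ?_⟩
      · rw [RegAux.dist_pt_vertical, Real.log_exp, Real.log_exp]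
      · exact RegAux.case_nonneg z b him hstep hb
    · obtain ⟨xlim, hx⟩ := RegAux.case_neg z b him hstep hb
      refine ⟨fun t => RegAux.pt xlim (Real.exp (-t)) (Real.exp_pos _), fun s t _ _ => ?_, hx⟩
      rw [RegAux.dist_pt_vertical, Real.log_exp, Real.log_exp]
      rw [show -s - -t = -(s - t) by ring, abs_neg]
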